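/- Let a ∈ ℝ and on ℂⁿ ≅ ℝ²ⁿ define d_M(x,y) = ∑_{j=1}^n (x_j − a y_j)²/(1+a²) and d_N(x,y) = ∑_{j=1}^n y_j². Then for each j, ∂d_M/∂z_j = (1+ia)(x_j − a y_j)/(1+a²) and ∂d_N/∂z_j = −i y_j, and consequently |Re⟨(∂d_M/∂z)_r, (∂d_N/∂z)_r⟩| ≤ (|a|/√(1+a²))·(d_{M,r} d_{N,r})^{1/2}, where (∂f/∂z)_r = (∂f/∂z₁,…,∂f/∂z_r), d_{M,r} = ∑_{j=1}^r (x_j − a y_j)²/(1+a²), d_{N,r} = ∑_{j=1}^r y_j², and ⟨·,·⟩ is the standard Hermitian inner product on ℂʳ. -/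

import Mathlib

open Complex

/-- Partial derivative in the direction `x_j`, identifying `ℂⁿ ≅ ℝⁿ × ℝⁿ`
via `z_j = x_j + i y_j`. -/
noncomputable def pderivX {n : ℕ} (j : Fin n)
    (f : (Fin n → ℝ) × (Fin n → ℝ) → ℝ) : (Fin n → ℝ) × (Fin n → ℝ) → ℝ :=
  fun p => deriv (fun t => f (Function.update p.1 j t, p.2)) (p.1 j)

/-- Partial derivative in the direction `y_j`. -/
noncomputable def pderivY {n : ℕ} (j : Fin n)
    (f : (Fin n → ℝ) × (Fin n → ℝ) → ℝ) : (Fin n → ℝ) × (Fin n → ℝ) → ℝ :=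
  fun p => deriv (fun t => f (p.1, Function.update p.2 j t)) (p.2 j)

/-- The holomorphic derivative `∂f/∂z_j = (1/2)(∂f/∂x_j − i ∂f/∂y_j)`. -/
noncomputable def dz {n : ℕ} (j : Fin n)
    (f : (Fin n → ℝ) × (Fin n → ℝ) → ℝ) (p : (Fin n → ℝ) × (Fin n → ℝ)) : ℂ :=
  (1/2 : ℂ) * ((pderivX j f p : ℂ) - Complex.I * (pderivY j f p : ℂ))

private lemma pderivX_dM {n : ℕ} (a : ℝ) (p : (Fin n → ℝ) × (Fin n → ℝ)) (j : Fin n) :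
    pderivX j (fun p => ∑ j', (p.1 j' - a * p.2 j') ^ 2 / (1 + a ^ 2)) p
      = 2 * (p.1 j - a * p.2 j) / (1 + a ^ 2) := by
  have key : ∀ j' : Fin n, HasDerivAt
      (fun t => (Function.update p.1 j t j' - a * p.2 j') ^ 2 / (1 + a ^ 2))
      (if j' = j then 2 * (p.1 j - a * p.2 j) / (1 + a ^ 2) else 0) (p.1 j) := by
    intro j'
    by_cases h : j' = j
    · subst h
      simp only [Function.update_self, if_pos rfl, if_true]
      have h1 : HasDerivAt (fun t : ℝ => t - a * p.2 j') 1 (p.1 j') :=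
        (hasDerivAt_id _).sub_const _
      have h2 := (h1.fun_pow 2).div_const (1 + a ^ 2)
      refine h2.congr_deriv ?_
      push_cast
      ring
    · simp only [Function.update_of_ne h, if_neg h]
      exact hasDerivAt_const _ _
  have hsum : HasDerivAt
      (fun t => ∑ j', (Function.update p.1 j t j' - a * p.2 j') ^ 2 / (1 + a ^ 2))
      (∑ j', if j' = j then 2 * (p.1 j - a * p.2 j) / (1 + a ^ 2) else 0) (p.1 j) :=
    HasDerivAt.fun_sum (fun j' _ => key j')
  simp only [Finset.sum_ite_eq', Finset.mem_univ, if_pos] at hsum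
  exact hsum.deriv

private lemma pderivY_dM {n : ℕ} (a : ℝ) (p : (Fin n → ℝ) × (Fin n → ℝ)) (j : Fin n) :
    pderivY j (fun p => ∑ j', (p.1 j' - a * p.2 j') ^ 2 / (1 + a ^ 2)) p
      = -2 * a * (p.1 j - a * p.2 j) / (1 + a ^ 2) := by
  have key : ∀ j' : Fin n, HasDerivAt
      (fun t => (p.1 j' - a * Function.update p.2 j t j') ^ 2 / (1 + a ^ 2))
      (if j' = j then -2 * a * (p.1 j - a * p.2 j) / (1 + a ^ 2) else 0) (p.2 j) := by
    intro j'
    by_cases h : j' = j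
    · subst h
      simp only [Function.update_self, if_pos rfl, if_true]
      have h1 : HasDerivAt (fun t : ℝ => p.1 j' - a * t) (0 - a * 1) (p.2 j') :=
        (hasDerivAt_const _ _).sub ((hasDerivAt_id _).const_mul a)
      have h2 := (h1.fun_pow 2).div_const (1 + a ^ 2)
      refine h2.congr_deriv ?_
      push_cast
      ring
    · simp only [Function.update_of_ne h, if_neg h]
      exact hasDerivAt_const _ _
  have hsum : HasDerivAt
      (fun t => ∑ j', (p.1 j' - a * Function.update p.2 j t j') ^ 2 / (1 + a ^ 2))
      (∑ j', if j' = j then -2 * a * (p.1 j - a * p.2 j) / (1 + a ^ 2) else 0) (p.2 j) :=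
    HasDerivAt.fun_sum (fun j' _ => key j')
  simp only [Finset.sum_ite_eq', Finset.mem_univ, if_pos] at hsum
  exact hsum.deriv

private lemma pderivX_dN {n : ℕ} (p : (Fin n → ℝ) × (Fin n → ℝ)) (j : Fin n) :
    pderivX j (fun p : (Fin n → ℝ) × (Fin n → ℝ) => ∑ j', (p.2 j') ^ 2) p = 0 := by
  simp [pderivX]

private lemma pderivY_dN {n : ℕ} (p : (Fin n → ℝ) × (Fin n → ℝ)) (j : Fin n) :
    pderivY j (fun p : (Fin n → ℝ) × (Fin n → ℝ) => ∑ j', (p.2 j') ^ 2) p = 2 * p.2 j := by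
  have key : ∀ j' : Fin n, HasDerivAt
      (fun t => (Function.update p.2 j t j') ^ 2)
      (if j' = j then 2 * p.2 j else 0) (p.2 j) := by
    intro j'
    by_cases h : j' = j
    · subst h
      simp only [Function.update_self, if_pos rfl, if_true]
      have h2 := (hasDerivAt_id (p.2 j')).fun_pow 2
      refine h2.congr_deriv ?_
      simp only [id_eq]
      push_cast
      ring
    · simp only [Function.update_of_ne h, if_neg h]
      exact hasDerivAt_const _ _
  have hsum : HasDerivAt
      (fun t => ∑ j', (Function.update p.2 j t j') ^ 2)
      (∑ j', if j' = j then 2 * p.2 j else 0) (p.2 j) :=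
    HasDerivAt.fun_sum (fun j' _ => key j')
  simp only [Finset.sum_ite_eq', Finset.mem_univ, if_pos] at hsum
  exact hsum.deriv

/-- Holomorphic derivatives of `d_M` and `d_N` for `M = (aI+iI)ℝⁿ`, `N = ℝⁿ`,
and the resulting Cauchy–Schwarz estimate on
`Re⟨(∂d_M/∂z)_r, (∂d_N/∂z)_r⟩`. -/
theorem dz_dM_dN_and_estimate (n : ℕ) (a : ℝ) :
    let dM : (Fin n → ℝ) × (Fin n → ℝ) → ℝ :=
      fun p => ∑ j, (p.1 j - a * p.2 j) ^ 2 / (1 + a ^ 2)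
    let dN : (Fin n → ℝ) × (Fin n → ℝ) → ℝ := fun p => ∑ j, (p.2 j) ^ 2
    ∀ p : (Fin n → ℝ) × (Fin n → ℝ),
      (∀ j : Fin n, dz j dM p =
          (1 + Complex.I * (a : ℂ)) * ((p.1 j - a * p.2 j : ℝ) : ℂ) / (1 + (a : ℂ) ^ 2)) ∧
      (∀ j : Fin n, dz j dN p = -Complex.I * ((p.2 j : ℝ) : ℂ)) ∧
      (∀ r : ℕ, 1 ≤ r → r ≤ n →
        |(∑ j ∈ Finset.univ.filter (fun j : Fin n => (j : ℕ) < r),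
            dz j dM p * (starRingEnd ℂ) (dz j dN p)).re| ≤
          (|a| / Real.sqrt (1 + a ^ 2)) *
            Real.sqrt ((∑ j ∈ Finset.univ.filter (fun j : Fin n => (j : ℕ) < r),
                (p.1 j - a * p.2 j) ^ 2 / (1 + a ^ 2)) *
              (∑ j ∈ Finset.univ.filter (fun j : Fin n => (j : ℕ) < r), (p.2 j) ^ 2))) := by
  intro dM dN p
  have hs : (0:ℝ) < 1 + a ^ 2 := by positivity
  have hsC : (1 + (a:ℂ) ^ 2) ≠ 0 := by
    intro h
    have h2 : ((1 + a ^ 2 : ℝ) : ℂ) = 0 := by push_cast; exact h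
    rw [Complex.ofReal_eq_zero] at h2
    exact hs.ne' h2
  have hM : ∀ j : Fin n, dz j dM p =
      (1 + Complex.I * (a : ℂ)) * ((p.1 j - a * p.2 j : ℝ) : ℂ) / (1 + (a : ℂ) ^ 2) := by
    intro j
    show (1/2 : ℂ) * ((pderivX j dM p : ℂ) - Complex.I * (pderivY j dM p : ℂ)) = _
    rw [show pderivX j dM p = 2 * (p.1 j - a * p.2 j) / (1 + a ^ 2) from pderivX_dM a p j,
       show pderivY j dM p = -2 * a * (p.1 j - a * p.2 j) / (1 + a ^ 2) from pderivY_dM a p j]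
    push_cast
    field_simp
    ring
  have hN : ∀ j : Fin n, dz j dN p = -Complex.I * ((p.2 j : ℝ) : ℂ) := by
    intro j
    show (1/2 : ℂ) * ((pderivX j dN p : ℂ) - Complex.I * (pderivY j dN p : ℂ)) = _
    rw [show pderivX j dN p = 0 from pderivX_dN p j,
       show pderivY j dN p = 2 * p.2 j from pderivY_dN p j]
    push_cast
    ring
  refine ⟨hM, hN, ?_⟩
  intro r _ _
  set F := Finset.univ.filter (fun j : Fin n => (j : ℕ) < r) with hF
  set u : Fin n → ℝ := fun j => p.1 j - a * p.2 j with hu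
  set v : Fin n → ℝ := fun j => p.2 j with hv
  have hterm : ∀ j ∈ F, (dz j dM p * (starRingEnd ℂ) (dz j dN p)).re
      = -a * (u j * v j) / (1 + a ^ 2) := by
    intro j _
    rw [hM j, hN j]
    simp only [hu, hv]
    have key : (1 + Complex.I * (a : ℂ)) * ((p.1 j - a * p.2 j : ℝ) : ℂ) / (1 + (a : ℂ) ^ 2) *
        (starRingEnd ℂ) (-Complex.I * ((p.2 j : ℝ) : ℂ))
        = ((-a * ((p.1 j - a * p.2 j) * p.2 j) / (1 + a ^ 2) : ℝ) : ℂ)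
          + (((p.1 j - a * p.2 j) * p.2 j / (1 + a ^ 2) : ℝ) : ℂ) * Complex.I := by
      simp only [map_mul, map_neg, Complex.conj_I, Complex.conj_ofReal, neg_neg]
      have hI := Complex.I_sq
      linear_combination (norm := (push_cast; ring1))
        ((a : ℂ) * ((p.1 j : ℂ) - (a : ℂ) * (p.2 j : ℂ)) * (p.2 j : ℂ) / (1 + (a : ℂ) ^ 2)) * hI
    rw [key]
    simp only [Complex.add_re, Complex.ofReal_re, Complex.re_ofReal_mul, Complex.I_re,
      mul_zero, add_zero]
  rw [Complex.re_sum, Finset.sum_congr rfl hterm]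
  have hsum : ∑ j ∈ F, -a * (u j * v j) / (1 + a ^ 2)
      = (-a / (1 + a ^ 2)) * ∑ j ∈ F, u j * v j := by
    rw [Finset.mul_sum]
    exact Finset.sum_congr rfl fun j _ => by ring
  rw [hsum, abs_mul]
  set S := ∑ j ∈ F, u j * v j with hS
  set U := ∑ j ∈ F, u j ^ 2 with hU
  set V := ∑ j ∈ F, v j ^ 2 with hV
  have hUnn : 0 ≤ U := Finset.sum_nonneg fun j _ => sq_nonneg _
  have hVnn : 0 ≤ V := Finset.sum_nonneg fun j _ => sq_nonneg _
  have hcs : S ^ 2 ≤ U * V := Finset.sum_mul_sq_le_sq_mul_sq F u v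
  have habsS : |S| ≤ Real.sqrt (U * V) := by
    rw [← Real.sqrt_sq_eq_abs]
    exact Real.sqrt_le_sqrt hcs
  have hRHS : (|a| / Real.sqrt (1 + a ^ 2)) * Real.sqrt ((U / (1 + a ^ 2)) * V)
      = (|a| / (1 + a ^ 2)) * Real.sqrt (U * V) := by
    rw [show U / (1 + a ^ 2) * V = U * V / (1 + a ^ 2) by ring,
      Real.sqrt_div (by positivity) _, div_mul_div_comm, Real.mul_self_sqrt hs.le]
    ring
  have hU' : (∑ j ∈ F, (p.1 j - a * p.2 j) ^ 2 / (1 + a ^ 2)) = U / (1 + a ^ 2) := by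
    simp [hU, hu, Finset.sum_div]
  rw [hU', hRHS]
  have h1 : |(-a / (1 + a ^ 2))| = |a| / (1 + a ^ 2) := by
    rw [abs_div, abs_neg, abs_of_pos hs]
  rw [h1]
  exact mul_le_mul_of_nonneg_left habsS (by positivity)
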